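/- Let k ≥ 2, m ≥ 0 with 2m ≤ k − 2, and λ > ((k−2m)/(k−2m−1))^k / (k−2m−1). Then the system x = (1+λx)^(-m)(1+λy)^(-(k-m)), y = (1+λy)^(-m)(1+λx)^(-(k-m)) has at least three positive solutions: (x̃, x̃), (x, y), and (y, x) with x ≠ y. -/

import Mathlib

open Finset
noncomputable def sgP (j : ℕ) (r : ℝ) : ℝ := ∑ i ∈ Finset.range j, r ^ i
noncomputable def sgA (n : ℕ) (r : ℝ) : ℝ := sgP n r / (r * sgP (n - 1) r)
noncomputable def sgH (k m n : ℕ) (r : ℝ) : ℝ :=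
  (sgA n r - 1) * (sgA n r) ^ m * (r * sgA n r) ^ (k - m)

lemma sg_one_le_P {j : ℕ} (hj : 1 ≤ j) {r : ℝ} (hr : 1 ≤ r) : 1 ≤ sgP j r := by
  have h0 : (0:ℝ) ≤ r := le_trans zero_le_one hr
  have := Finset.single_le_sum (f := fun i => r ^ i) (fun i _ => pow_nonneg h0 i)
    (Finset.mem_range.mpr hj)
  simpa [sgP] using this

lemma sg_P_le {j : ℕ} {r : ℝ} (hr : 1 ≤ r) : sgP j r ≤ j * r ^ (j-1) := by
  calc sgP j r ≤ ∑ _i ∈ Finset.range j, r^(j-1) := by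
        apply Finset.sum_le_sum
        intro i hi
        exact pow_le_pow_right₀ hr (by have := Finset.mem_range.mp hi; omega)
    _ = j * r^(j-1) := by simp [Finset.sum_const, nsmul_eq_mul]

lemma sg_rP {n : ℕ} (hn : 1 ≤ n) (r : ℝ) : r * sgP (n-1) r = sgP n r - 1 := by
  obtain ⟨j, rfl⟩ : ∃ j, n = j + 1 := ⟨n-1, by omega⟩
  simp only [sgP, Nat.add_sub_cancel]
  rw [Finset.mul_sum, Finset.sum_range_succ' (fun i => r ^ i) j]
  simp [pow_succ]
  exact Finset.sum_congr rfl (fun i _ => by ring)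

lemma sg_P_split {n : ℕ} (hn : 1 ≤ n) (r : ℝ) : sgP n r = sgP (n-1) r + r ^ (n-1) := by
  obtain ⟨j, rfl⟩ : ∃ j, n = j + 1 := ⟨n-1, by omega⟩
  simp [sgP, Finset.sum_range_succ]

lemma sg_P_one (j : ℕ) : sgP j 1 = j := by simp [sgP]

lemma sg_P_continuous (j : ℕ) : Continuous (fun r : ℝ => sgP j r) := by
  unfold sgP
  exact continuous_finset_sum _ (fun i _ => continuous_pow i)

lemma sg_facts {n : ℕ} (hn : 2 ≤ n) {r : ℝ} (hr : 1 ≤ r) :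
    1 < sgA n r ∧ sgA n r - 1 = (r * sgP (n-1) r)⁻¹ ∧
    r * sgA n r - 1 = r^n * (sgA n r - 1) := by
  have hr0 : (0:ℝ) < r := lt_of_lt_of_le zero_lt_one hr
  have hQ : 1 ≤ sgP (n-1) r := sg_one_le_P (by omega) hr
  have hQ0 : (0:ℝ) < sgP (n-1) r := lt_of_lt_of_le zero_lt_one hQ
  have hD : (0:ℝ) < r * sgP (n-1) r := mul_pos hr0 hQ0
  have hP : sgP n r = r * sgP (n-1) r + 1 := by
    have := sg_rP (by omega : 1 ≤ n) r; linarith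
  have hA : sgA n r - 1 = (r * sgP (n-1) r)⁻¹ := by
    unfold sgA; rw [hP]; field_simp; ring
  have hA1 : 1 < sgA n r := by
    have : (0:ℝ) < (r * sgP (n-1) r)⁻¹ := inv_pos.mpr hD
    linarith [hA]
  refine ⟨hA1, hA, ?_⟩
  have hs : sgP n r = sgP (n-1) r + r^(n-1) := sg_P_split (by omega) r
  have hpow : r^n = r * r^(n-1) := by
    rw [← pow_succ']; congr 1; omega
  rw [hA]
  unfold sgA
  rw [hs, hpow]
  field_simp
  ring

lemma sg_H_lb {k m n : ℕ} (hn : 2 ≤ n) (hkm : k - m = n + m) {r : ℝ} (hr : 1 ≤ r) :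
    r / ((n:ℝ) - 1) ≤ sgH k m n r := by
  obtain ⟨hA1, hA, _⟩ := sg_facts hn hr
  have hr0 : (0:ℝ) < r := lt_of_lt_of_le zero_lt_one hr
  have hNpos : (0:ℝ) < (n:ℝ) - 1 := by
    have : (2:ℝ) ≤ (n:ℝ) := by exact_mod_cast hn
    linarith
  have hQle : sgP (n-1) r ≤ ((n:ℝ)-1) * r^(n-2) := by
    have := sg_P_le (j := n-1) hr
    have hc : ((n-1 : ℕ) : ℝ) = (n:ℝ) - 1 := by
      push_cast [Nat.cast_sub (by omega : 1 ≤ n)]; ring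
    have he : (n-1) - 1 = n - 2 := by omega
    rwa [hc, he] at this
  have hDle : r * sgP (n-1) r ≤ ((n:ℝ)-1) * r^(n-1) := by
    have hp : r^(n-2) * r = r^(n-1) := by rw [← pow_succ]; congr 1; omega
    calc r * sgP (n-1) r ≤ r * (((n:ℝ)-1) * r^(n-2)) := by
          apply mul_le_mul_of_nonneg_left hQle (le_of_lt hr0)
      _ = ((n:ℝ)-1) * r^(n-1) := by rw [← hp]; ring
  have hD : (0:ℝ) < r * sgP (n-1) r :=
    mul_pos hr0 (lt_of_lt_of_le zero_lt_one (sg_one_le_P (by omega) hr))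
  have hbound : ((n:ℝ)-1)⁻¹ * (r^(n-1))⁻¹ ≤ sgA n r - 1 := by
    rw [hA, ← mul_inv]
    exact inv_anti₀ hD hDle
  have hApow : (1:ℝ) ≤ (sgA n r)^m := one_le_pow₀ (le_of_lt hA1)
  have h2 : r^(n-1) * r^(m+1) = r^(k-m) := by rw [← pow_add]; congr 1; omega
  have hstep1 : r / ((n:ℝ)-1) ≤ (((n:ℝ)-1)⁻¹ * (r^(n-1))⁻¹) * 1 * r^(k-m) := by
    rw [← h2]
    have hrn : (0:ℝ) < r^(n-1) := pow_pos hr0 _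
    have he : (((n:ℝ)-1)⁻¹ * (r^(n-1))⁻¹) * 1 * (r^(n-1) * r^(m+1)) = r^(m+1)/((n:ℝ)-1) := by
      field_simp
    rw [he]
    have hrm : r ≤ r^(m+1) := le_self_pow₀ hr (by omega)
    exact (div_le_div_iff_of_pos_right hNpos).mpr hrm
  calc r / ((n:ℝ)-1) ≤ (((n:ℝ)-1)⁻¹ * (r^(n-1))⁻¹) * 1 * r^(k-m) := hstep1
    _ ≤ (sgA n r - 1) * (sgA n r)^m * (r * sgA n r)^(k-m) := by
        have hApos : (0:ℝ) ≤ sgA n r - 1 := by linarith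
        have hrle : r ≤ r * sgA n r := by nlinarith
        have hrA : r^(k-m) ≤ (r * sgA n r)^(k-m) :=
          pow_le_pow_left₀ (le_of_lt hr0) hrle _
        have hmn1 : (0:ℝ) ≤ ((n:ℝ)-1)⁻¹ * (r^(n-1))⁻¹ := by positivity
        exact mul_le_mul (mul_le_mul hbound hApow zero_le_one hApos) hrA
          (pow_nonneg (le_of_lt hr0) _)
          (mul_nonneg hApos (pow_nonneg (by linarith) m))
    _ = sgH k m n r := rfl

lemma sg_H_one {k m n : ℕ} (hn : 2 ≤ n) (hmk : m + (k - m) = k) :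
    sgH k m n 1 = ((n:ℝ)/((n:ℝ)-1))^k / ((n:ℝ)-1) := by
  have hN : (0:ℝ) < (n:ℝ) - 1 := by
    have : (2:ℝ) ≤ (n:ℝ) := by exact_mod_cast hn
    linarith
  have h1 : sgA n 1 = (n:ℝ)/((n:ℝ)-1) := by
    unfold sgA
    rw [sg_P_one, sg_P_one, Nat.cast_sub (by omega : 1 ≤ n)]
    push_cast
    ring
  unfold sgH
  rw [h1, one_mul, mul_assoc, ← pow_add, hmk]
  have h2 : (n:ℝ)/((n:ℝ)-1) - 1 = ((n:ℝ)-1)⁻¹ := by field_simp; ring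
  rw [h2, div_eq_mul_inv]
  ring

lemma sg_A_contOn {n : ℕ} (hn : 2 ≤ n) : ContinuousOn (sgA n) (Set.Ici 1) := by
  apply ContinuousOn.div (sg_P_continuous n).continuousOn
    ((continuous_id.mul (sg_P_continuous (n-1))).continuousOn)
  intro r hr
  have hr1 : (1:ℝ) ≤ r := hr
  exact ne_of_gt (mul_pos (lt_of_lt_of_le zero_lt_one hr1)
    (lt_of_lt_of_le zero_lt_one (sg_one_le_P (by omega) hr1)))

lemma sg_H_contOn {k m n : ℕ} (hn : 2 ≤ n) : ContinuousOn (sgH k m n) (Set.Ici 1) := by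
  unfold sgH
  exact (((sg_A_contOn hn).sub continuousOn_const).mul ((sg_A_contOn hn).pow m)).mul
    ((continuousOn_id.mul (sg_A_contOn hn)).pow (k-m))

theorem stmt_14 (k m : ℕ) (hk : 2 ≤ k) (hm : 2 * m + 2 ≤ k) (lam : ℝ)
    (hlam : (((k : ℝ) - 2 * m) / ((k : ℝ) - 2 * m - 1)) ^ k / ((k : ℝ) - 2 * m - 1) < lam) :
    ∃ xt x y : ℝ, 0 < xt ∧ 0 < x ∧ 0 < y ∧ x ≠ y ∧
      (xt = ((1 + lam * xt) ^ m)⁻¹ * ((1 + lam * xt) ^ (k - m))⁻¹) ∧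
      (x = ((1 + lam * x) ^ m)⁻¹ * ((1 + lam * y) ^ (k - m))⁻¹ ∧
       y = ((1 + lam * y) ^ m)⁻¹ * ((1 + lam * x) ^ (k - m))⁻¹) := by
  set n := k - 2 * m with hndef
  have hn2 : 2 ≤ n := by omega
  have hncast : ((n:ℝ)) = (k:ℝ) - 2 * m := by
    rw [hndef, Nat.cast_sub (by omega)]; push_cast; ring
  have hN : (0:ℝ) < (n:ℝ) - 1 := by
    have : (2:ℝ) ≤ (n:ℝ) := by exact_mod_cast hn2
    linarith
  have hNn : (0:ℝ) < (n:ℝ) := by linarith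
  have hN1 : (1:ℝ) ≤ (n:ℝ) - 1 := by
    have : (2:ℝ) ≤ (n:ℝ) := by exact_mod_cast hn2
    linarith
  have hlam' : ((n:ℝ)/((n:ℝ)-1))^k / ((n:ℝ)-1) < lam := by
    rw [hncast]; exact hlam
  have hlamcr : (0:ℝ) < ((n:ℝ)/((n:ℝ)-1))^k / ((n:ℝ)-1) := by positivity
  have hlam0 : (0:ℝ) < lam := lt_trans hlamcr hlam'
  have hlne : lam ≠ 0 := ne_of_gt hlam0
  -- symmetric solution
  have hcont : ContinuousOn (fun x : ℝ => x * (1+lam*x)^k) (Set.Icc 0 1) := by fun_prop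
  have hmem : (1:ℝ) ∈ Set.Icc ((fun x : ℝ => x * (1+lam*x)^k) 0) ((fun x : ℝ => x * (1+lam*x)^k) 1) := by
    constructor
    · simp
    · simp only
      have h1 : (1:ℝ) ≤ (1+lam*1)^k := one_le_pow₀ (by linarith)
      simpa using h1
  obtain ⟨xt, hxtmem, hxteq⟩ := intermediate_value_Icc (by norm_num : (0:ℝ) ≤ 1) hcont hmem
  simp only at hxteq
  have hxt0 : 0 < xt := by
    rcases lt_or_eq_of_le hxtmem.1 with h | h
    · exact h
    · exfalso; rw [← h] at hxteq; simp at hxteq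
  have hxtgoal : xt = ((1 + lam * xt) ^ m)⁻¹ * ((1 + lam * xt) ^ (k - m))⁻¹ := by
    rw [← mul_inv, ← pow_add, (by omega : m + (k - m) = k)]
    exact eq_inv_of_mul_eq_one_left hxteq
  -- asymmetric solutions
  set r2 : ℝ := ((n:ℝ)-1) * (lam+1) with hr2def
  have h1r2 : (1:ℝ) ≤ r2 := by nlinarith [hN1, hlam0]
  have hmemH : lam ∈ Set.Icc (sgH k m n 1) (sgH k m n r2) := by
    constructor
    · rw [sg_H_one (k := k) (m := m) hn2 (by omega)]; exact le_of_lt hlam'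
    · have hlb := sg_H_lb (k := k) (m := m) hn2 (by omega) h1r2
      have h3 : r2 / ((n:ℝ)-1) = lam + 1 := by
        rw [hr2def, mul_comm, mul_div_assoc, div_self (ne_of_gt hN), mul_one]
      rw [h3] at hlb; linarith
  obtain ⟨r, hrmem, hHr⟩ := intermediate_value_Icc h1r2
    ((sg_H_contOn hn2).mono (Set.Icc_subset_Ici_self)) hmemH
  have hr1 : (1:ℝ) ≤ r := hrmem.1
  have hrne : 1 < r := by
    rcases lt_or_eq_of_le hr1 with h | h
    · exact h
    · exfalso; rw [← h, sg_H_one (k := k) (m := m) hn2 (by omega)] at hHr; linarith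
  obtain ⟨hA1, hAinv, hrA⟩ := sg_facts hn2 hr1
  unfold sgH at hHr
  set a := sgA n r with hadef
  set b := r * a with hbdef
  have hr0 : (0:ℝ) < r := by linarith
  have ha0 : (0:ℝ) < a := by linarith
  have hb1 : 1 < b := by nlinarith
  have hb0 : (0:ℝ) < b := by linarith
  have haneb : a ≠ b := by
    intro h
    have : b - a = (r - 1) * a := by rw [hbdef]; ring
    nlinarith
  set x := (a - 1)/lam with hxdef
  set y := (b - 1)/lam with hydef
  have hx0 : 0 < x := div_pos (by linarith) hlam0
  have hy0 : 0 < y := div_pos (by linarith) hlam0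
  have hxy : x ≠ y := by
    intro h
    apply haneb
    rw [hxdef, hydef, div_eq_div_iff hlne hlne] at h
    have := mul_right_cancel₀ hlne h
    linarith
  have h1x : 1 + lam * x = a := by rw [hxdef]; field_simp; ring
  have h1y : 1 + lam * y = b := by rw [hydef]; field_simp; ring
  have hH' : (a - 1) * a^m * b^(k-m) = lam := hHr
  have heq1 : x * (a^m * b^(k-m)) = 1 := by
    rw [hxdef, div_mul_eq_mul_div,
      show (a-1) * (a^m * b^(k-m)) = (a-1) * a^m * b^(k-m) from by ring, hH']
    exact div_self hlne
  have hkey : (b - 1) * b^m * a^(k-m) = (a - 1) * a^m * b^(k-m) := by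
    rw [show k - m = n + m from by omega, hrA, hbdef]
    ring
  have heq2 : y * (b^m * a^(k-m)) = 1 := by
    rw [hydef, div_mul_eq_mul_div,
      show (b-1) * (b^m * a^(k-m)) = (b-1) * b^m * a^(k-m) from by ring, hkey, hH']
    exact div_self hlne
  refine ⟨xt, x, y, hxt0, hx0, hy0, hxy, hxtgoal, ?_, ?_⟩
  · rw [h1x, h1y, ← mul_inv]
    exact eq_inv_of_mul_eq_one_left heq1
  · rw [h1x, h1y, ← mul_inv]
    exact eq_inv_of_mul_eq_one_left heq2
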